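/- Let τ = {nop, set, res} ∪ ω be a type of nets with nonempty ω ⊆ {used, free}, and let φ be a cubic monotone 3-CNF with m clauses. The key event k is τ-inhibitable at the key state q in the loop-enhanced TS A^×_φ if and only if φ has a one-in-three model. -/

import Mathlib

/-! Boolean interactions -/

abbrev Interaction := Bool → Option Bool

def iNop : Interaction := fun b => some b
def iInp : Interaction := fun b => if b then some false else none
def iOut : Interaction := fun b => if b then none else some true
def iSet : Interaction := fun _ => some true
def iRes : Interaction := fun _ => some false
def iSwap : Interaction := fun b => some (!b)
def iUsed : Interaction := fun b => if b then some true else none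
def iFree : Interaction := fun b => if b then none else some false

def allInteractions : Set Interaction :=
  {iNop, iInp, iOut, iSet, iRes, iSwap, iUsed, iFree}

/-! Transition systems and regions -/

structure TS (S E : Type) where
  delta : S → E → Option S
  init : S

def IsRegion {S E : Type} (A : TS S E) (τ : Set Interaction)
    (sup : S → Bool) (sig : E → Interaction) : Prop :=
  (∀ e, sig e ∈ τ) ∧
  ∀ s e s', A.delta s e = some s' → sig e (sup s) = some (sup s')

def Separable {S E : Type} (A : TS S E) (τ : Set Interaction) (s s' : S) : Prop :=
  ∃ sup sig, IsRegion A τ sup sig ∧ sup s ≠ sup s'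

def Inhibitable {S E : Type} (A : TS S E) (τ : Set Interaction) (e : E) (s : S) : Prop :=
  ∃ sup sig, IsRegion A τ sup sig ∧ sig e (sup s) = none

def SSP {S E : Type} (A : TS S E) (τ : Set Interaction) : Prop :=
  ∀ s s' : S, s ≠ s' → Separable A τ s s'

def ESSP {S E : Type} (A : TS S E) (τ : Set Interaction) : Prop :=
  ∀ (s : S) (e : E), A.delta s e = none → Inhibitable A τ e s

def Feasible {S E : Type} (A : TS S E) (τ : Set Interaction) : Prop :=
  SSP A τ ∧ ESSP A τ

def Reachable {S E : Type} (A : TS S E) : Prop :=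
  ∀ s : S, Relation.ReflTransGen (fun x y => ∃ e, A.delta x e = some y) A.init s

/-! The extended TS A^+_φ and its loop-enhancement A^×_φ for a cubic monotone
3-CNF φ with m clauses, given by X : Fin m → Fin 3 → V. -/

inductive QState (m : ℕ) where
  | s0 | s1 | q
  | t (i : Fin m) (j : Fin 9)
  | mm (j : Fin 5)
  | p (i : Fin m) (j : Fin 4)

inductive QEvent (m : ℕ) (V : Type) where
  | k | h
  | hc (i : Fin m)
  | r (i : Fin m)
  | var (v : V)
  | ea | ec | eu | ev
  | ai (i : Fin m)
  | bi (i : Fin m)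
  | x (i : Fin m) (j : Fin 3)

/-- The clause gadget of clause i (as in A_φ). -/
def gadgetQ {m : ℕ} {V : Type} [DecidableEq V] (X : Fin m → Fin 3 → V)
    (i : Fin m) (j : Fin 9) (v : V) : Option (QState m) :=
  if j = 0 then
    if v = X i 0 then some (.t i 1)
    else if v = X i 1 then some (.t i 7)
    else if v = X i 2 then some (.t i 3) else none
  else if j = 1 then
    if v = X i 1 then some (.t i 2)
    else if v = X i 2 then some (.t i 4) else none
  else if j = 2 then
    if v = X i 2 then some (.t i 5) else none
  else if j = 3 then
    if v = X i 0 then some (.t i 4)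
    else if v = X i 1 then some (.t i 6) else none
  else if j = 4 then
    if v = X i 1 then some (.t i 5) else none
  else if j = 6 then
    if v = X i 0 then some (.t i 5) else none
  else if j = 7 then
    if v = X i 0 then some (.t i 2)
    else if v = X i 2 then some (.t i 6) else none
  else none

/-- The reverse transitions t' --x_{i,j}--> t for every clause-gadget
transition t --X_{i,j}--> t'. -/
def xgadget {m : ℕ} (i : Fin m) (a : Fin 9) (j : Fin 3) : Option (QState m) :=
  if j = 0 then
    if a = 1 then some (.t i 0)
    else if a = 4 then some (.t i 3)
    else if a = 5 then some (.t i 6)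
    else if a = 2 then some (.t i 7) else none
  else if j = 1 then
    if a = 7 then some (.t i 0)
    else if a = 2 then some (.t i 1)
    else if a = 6 then some (.t i 3)
    else if a = 5 then some (.t i 4) else none
  else
    if a = 3 then some (.t i 0)
    else if a = 4 then some (.t i 1)
    else if a = 5 then some (.t i 2)
    else if a = 6 then some (.t i 7) else none

/-- The transition function of the extended TS A^+_φ. -/
def deltaPlus {m : ℕ} {V : Type} [DecidableEq V] (X : Fin m → Fin 3 → V) :
    QState m → QEvent m V → Option (QState m) :=
  fun s e =>
    match s, e with
    | .s0, .k => some .s1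
    | .s0, .h => some .q
    | .s0, .r i => some (.t i 0)
    | .s0, .ea => some (.mm 0)
    | .s0, .ai i => some (.p i 0)
    | .s1, .r i => some (.t i 8)
    | .q, .hc i => some (.t i 5)
    | .t i j, .k => if j = 0 then some (.t i 8) else none
    | .t i j, .var v => gadgetQ X i j v
    | .t i j, .x i' j' => if i' = i then xgadget i j j' else none
    | .mm j, .k =>
        if j = 0 then some (.mm 1) else if j = 3 then some (.mm 2) else none
    | .mm j, .ev => if j = 1 then some (.mm 2) else none
    | .mm j, .ec => if j = 0 then some (.mm 3) else none
    | .mm j, .h => if j = 3 then some (.mm 4) else none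
    | .mm j, .eu => if j = 0 then some (.mm 4) else none
    | .p i j, .ev => if j = 0 then some (.p i 1) else none
    | .p i j, .bi i' => if i' = i ∧ j = 1 then some (.p i 2) else none
    | .p i j, .eu => if j = 2 then some (.p i 3) else none
    | .p i j, .hc i' => if i' = i ∧ j = 0 then some (.p i 3) else none
    | _, _ => none

open Classical in
/-- The loop-enhancement A^×_φ: all transitions of A^+_φ together with a loop
at the target of every transition of A^+_φ (for the same event). -/
noncomputable def AphiX {m : ℕ} {V : Type} [DecidableEq V]
    (X : Fin m → Fin 3 → V) : TS (QState m) (QEvent m V) where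
  delta := fun s e =>
    match deltaPlus X s e with
    | some s' => some s'
    | none => if ∃ z, deltaPlus X z e = some s then some s else none
  init := .s0

/-- φ is a cubic monotone 3-CNF: each clause consists of three distinct
variables and every variable is a member of exactly three clauses. -/
def CubicMonotone {m : ℕ} {V : Type} [DecidableEq V] [Fintype V]
    (X : Fin m → Fin 3 → V) : Prop :=
  (∀ i : Fin m, Function.Injective (X i)) ∧
  (∀ v : V,
    (Finset.univ.filter (fun p : Fin m × Fin 3 => X p.1 p.2 = v)).card = 3)

/-- M is a one-in-three model of φ: it hits every clause exactly once. -/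
def OneInThree {m : ℕ} {V : Type} (X : Fin m → Fin 3 → V) (M : Set V) : Prop :=
  ∀ i : Fin m, ∃! j : Fin 3, X i j ∈ M

/-! Auxiliary development -/

def T5 : Set Interaction := {iNop, iSet, iRes, iUsed, iFree}

lemma t5_fix {f : Interaction} (hf : f ∈ T5) {b b' : Bool} (h : f b = some b') :
    f b' = some b' := by
  simp only [T5, Set.mem_insert_iff, Set.mem_singleton_iff] at hf
  rcases hf with rfl|rfl|rfl|rfl|rfl <;> cases b <;> cases b' <;>
    simp_all [iNop, iSet, iRes, iUsed, iFree]

lemma t5_res {f : Interaction} (hf : f ∈ T5) (h : f true = some false) : f = iRes := by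
  simp only [T5, Set.mem_insert_iff, Set.mem_singleton_iff] at hf
  rcases hf with rfl|rfl|rfl|rfl|rfl <;> simp_all [iNop, iSet, iRes, iUsed, iFree]

lemma t5_set {f : Interaction} (hf : f ∈ T5) (h : f false = some true) : f = iSet := by
  simp only [T5, Set.mem_insert_iff, Set.mem_singleton_iff] at hf
  rcases hf with rfl|rfl|rfl|rfl|rfl <;> simp_all [iNop, iSet, iRes, iUsed, iFree]

lemma t5_true {f : Interaction} (hf : f ∈ T5) {b : Bool} (h : f true = some b) :
    f = iRes ∨ b = true := by
  simp only [T5, Set.mem_insert_iff, Set.mem_singleton_iff] at hf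
  rcases hf with rfl|rfl|rfl|rfl|rfl <;> simp_all [iNop, iSet, iRes, iUsed, iFree]

def iCompl (f : Interaction) : Interaction := fun b => (f (!b)).map (!·)

lemma iCompl_nop : iCompl iNop = iNop := by funext b; cases b <;> rfl
lemma iCompl_set : iCompl iSet = iRes := by funext b; cases b <;> rfl
lemma iCompl_res : iCompl iRes = iSet := by funext b; cases b <;> rfl
lemma iCompl_used : iCompl iUsed = iFree := by funext b; cases b <;> rfl
lemma iCompl_free : iCompl iFree = iUsed := by funext b; cases b <;> rfl

lemma iCompl_trans {f : Interaction} {b b' : Bool} (h : f b = some b') :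
    iCompl f (!b) = some (!b') := by
  simp [iCompl, h]
lemma iUsed_eq {b b' : Bool} (h : iUsed b = some b') : b = true ∧ b' = true := by
  cases b <;> simp [iUsed] at h <;> simp [h]

lemma region_transfer {m : ℕ} {V : Type} [DecidableEq V] (X : Fin m → Fin 3 → V)
    (τ : Set Interaction) (hτ : τ ⊆ T5) (sup : QState m → Bool) (sig : QEvent m V → Interaction)
    (h1 : ∀ e, sig e ∈ τ)
    (h2 : ∀ s e s', deltaPlus X s e = some s' → sig e (sup s) = some (sup s')) :
    IsRegion (AphiX X) τ sup sig := by
  refine ⟨h1, fun s e s' h => ?_⟩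
  simp only [AphiX] at h
  cases hd : deltaPlus X s e with
  | none =>
    rw [hd] at h
    split_ifs at h with hz
    obtain ⟨z, hz'⟩ := hz
    obtain rfl : s = s' := Option.some.inj h
    exact t5_fix (hτ (h1 e)) (h2 z e s hz')
  | some s2 =>
    rw [hd] at h
    obtain rfl : s2 = s' := Option.some.inj h
    exact h2 s e s2 hd

lemma region_restrict {m : ℕ} {V : Type} [DecidableEq V] {X : Fin m → Fin 3 → V}
    {τ : Set Interaction} {sup : QState m → Bool} {sig : QEvent m V → Interaction}
    (hr : IsRegion (AphiX X) τ sup sig) :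
    ∀ s e s', deltaPlus X s e = some s' → sig e (sup s) = some (sup s') := by
  intro s e s' h
  refine hr.2 s e s' ?_
  simp only [AphiX]
  rw [h]
section Extract
variable {m : ℕ} {V : Type} [DecidableEq V]

lemma dp_t_k (X : Fin m → Fin 3 → V) (i : Fin m) :
    deltaPlus X (.t i 0) .k = some (.t i 8) := by simp [deltaPlus]

lemma dp_mm_k0 (X : Fin m → Fin 3 → V) :
    deltaPlus (m := m) X (.mm 0) .k = some (.mm 1) := by simp [deltaPlus]

lemma dp_mm_k3 (X : Fin m → Fin 3 → V) :
    deltaPlus (m := m) X (.mm 3) .k = some (.mm 2) := by simp [deltaPlus]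

lemma dp_mm_h (X : Fin m → Fin 3 → V) :
    deltaPlus (m := m) X (.mm 3) .h = some (.mm 4) := by simp [deltaPlus]

lemma dp_mm_eu (X : Fin m → Fin 3 → V) :
    deltaPlus (m := m) X (.mm 0) .eu = some (.mm 4) := by simp [deltaPlus]

lemma dp_p_eu (X : Fin m → Fin 3 → V) (i : Fin m) :
    deltaPlus X (.p i 2) .eu = some (.p i 3) := by simp [deltaPlus]

lemma dp_p_hc (X : Fin m → Fin 3 → V) (i : Fin m) :
    deltaPlus X (.p i 0) (.hc i) = some (.p i 3) := by simp [deltaPlus]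

lemma dp_x (X : Fin m → Fin 3 → V) (i : Fin m) (j : Fin 9) (a : Fin 3) :
    deltaPlus X (.t i j) (.x i a) = xgadget i j a := by simp [deltaPlus]

end Extract
set_option maxHeartbeats 1000000 in
lemma extract {m : ℕ} {V : Type} [DecidableEq V] (X : Fin m → Fin 3 → V)
    (hinj : ∀ i, Function.Injective (X i))
    (sup : QState m → Bool) (sig : QEvent m V → Interaction)
    (hT5 : ∀ e, sig e ∈ T5)
    (h2 : ∀ s e s', deltaPlus X s e = some s' → sig e (sup s) = some (sup s'))
    (hk : sig .k = iUsed) (hq : sup .q = false) :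
    OneInThree X {v | sig (.var v) = iRes} := by
  have hs0 : sup (.s0 : QState m) = true := by
    have h := h2 .s0 .k .s1 rfl
    rw [hk] at h
    exact (iUsed_eq h).1
  have hh : sig (.h : QEvent m V) = iRes := by
    refine t5_res (hT5 .h) ?_
    have h := h2 .s0 .h .q rfl
    rwa [hs0, hq] at h
  have hm0 : sup (.mm 0 : QState m) = true := by
    have h := h2 (.mm 0) .k (.mm 1) (dp_mm_k0 X)
    rw [hk] at h
    exact (iUsed_eq h).1
  have hm3 : sup (.mm 3 : QState m) = true := by
    have h := h2 (.mm 3) .k (.mm 2) (dp_mm_k3 X)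
    rw [hk] at h
    exact (iUsed_eq h).1
  have hm4 : sup (.mm 4 : QState m) = false := by
    have h := h2 (.mm 3) .h (.mm 4) (dp_mm_h X)
    rw [hh, hm3] at h
    exact (Option.some.inj h).symm
  have heu : sig (.eu : QEvent m V) = iRes := by
    refine t5_res (hT5 .eu) ?_
    have h := h2 (.mm 0) .eu (.mm 4) (dp_mm_eu X)
    rwa [hm0, hm4] at h
  intro i
  have hne : ∀ a b : Fin 3, a ≠ b → X i a ≠ X i b := fun a b hab h => hab (hinj i h)
  have hp3 : sup (.p i 3) = false := by
    have h := h2 (.p i 2) .eu (.p i 3) (dp_p_eu X i)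
    rw [heu] at h
    exact (Option.some.inj h).symm
  have hhc : sig (.hc i) false = some false := by
    have h := h2 (.p i 0) (.hc i) (.p i 3) (dp_p_hc X i)
    rw [hp3] at h
    cases hb : sup (.p i 0) with
    | false => rwa [hb] at h
    | true =>
      rw [hb] at h
      rw [t5_res (hT5 (.hc i)) h]
      rfl
  have hu5 : sup (.t i 5) = false := by
    have h := h2 .q (.hc i) (.t i 5) rfl
    rw [hq] at h
    exact (Option.some.inj (h.symm.trans hhc))
  have hu0 : sup (.t i 0) = true := by
    have h := h2 (.t i 0) .k (.t i 8) (dp_t_k X i)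
    rw [hk] at h
    exact (iUsed_eq h).1
  -- gadget forward edges
  have E01 : sig (.var (X i 0)) (sup (.t i 0)) = some (sup (.t i 1)) :=
    h2 _ (.var (X i 0)) _ (by simp [deltaPlus, gadgetQ])
  have E07 : sig (.var (X i 1)) (sup (.t i 0)) = some (sup (.t i 7)) :=
    h2 _ (.var (X i 1)) _ (by simp [deltaPlus, gadgetQ, hne 1 0 (by decide)])
  have E03 : sig (.var (X i 2)) (sup (.t i 0)) = some (sup (.t i 3)) :=
    h2 _ (.var (X i 2)) _
      (by simp [deltaPlus, gadgetQ, hne 2 0 (by decide), hne 2 1 (by decide)])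
  have E12 : sig (.var (X i 1)) (sup (.t i 1)) = some (sup (.t i 2)) :=
    h2 _ (.var (X i 1)) _ (by simp [deltaPlus, gadgetQ])
  have E14 : sig (.var (X i 2)) (sup (.t i 1)) = some (sup (.t i 4)) :=
    h2 _ (.var (X i 2)) _ (by simp [deltaPlus, gadgetQ, hne 2 1 (by decide)])
  have E25 : sig (.var (X i 2)) (sup (.t i 2)) = some (sup (.t i 5)) :=
    h2 _ (.var (X i 2)) _ (by simp [deltaPlus, gadgetQ])
  have E34 : sig (.var (X i 0)) (sup (.t i 3)) = some (sup (.t i 4)) :=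
    h2 _ (.var (X i 0)) _ (by simp [deltaPlus, gadgetQ])
  have E36 : sig (.var (X i 1)) (sup (.t i 3)) = some (sup (.t i 6)) :=
    h2 _ (.var (X i 1)) _ (by simp [deltaPlus, gadgetQ, hne 1 0 (by decide)])
  have E72 : sig (.var (X i 0)) (sup (.t i 7)) = some (sup (.t i 2)) :=
    h2 _ (.var (X i 0)) _ (by simp [deltaPlus, gadgetQ])
  have E76 : sig (.var (X i 2)) (sup (.t i 7)) = some (sup (.t i 6)) :=
    h2 _ (.var (X i 2)) _ (by simp [deltaPlus, gadgetQ, hne 2 0 (by decide)])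
  -- reverse edges
  have R10 : sig (.x i 0) (sup (.t i 1)) = some (sup (.t i 0)) :=
    h2 _ (.x i 0) _ (by rw [dp_x]; simp [xgadget])
  have R70 : sig (.x i 1) (sup (.t i 7)) = some (sup (.t i 0)) :=
    h2 _ (.x i 1) _ (by rw [dp_x]; simp [xgadget])
  have R30 : sig (.x i 2) (sup (.t i 3)) = some (sup (.t i 0)) :=
    h2 _ (.x i 2) _ (by rw [dp_x]; simp [xgadget])
  have R27 : sig (.x i 0) (sup (.t i 2)) = some (sup (.t i 7)) :=
    h2 _ (.x i 0) _ (by rw [dp_x]; simp [xgadget])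
  have R43 : sig (.x i 0) (sup (.t i 4)) = some (sup (.t i 3)) :=
    h2 _ (.x i 0) _ (by rw [dp_x]; simp [xgadget])
  have R21 : sig (.x i 1) (sup (.t i 2)) = some (sup (.t i 1)) :=
    h2 _ (.x i 1) _ (by rw [dp_x]; simp [xgadget])
  have R63 : sig (.x i 1) (sup (.t i 6)) = some (sup (.t i 3)) :=
    h2 _ (.x i 1) _ (by rw [dp_x]; simp [xgadget])
  have R41 : sig (.x i 2) (sup (.t i 4)) = some (sup (.t i 1)) :=
    h2 _ (.x i 2) _ (by rw [dp_x]; simp [xgadget])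
  have R67 : sig (.x i 2) (sup (.t i 6)) = some (sup (.t i 7)) :=
    h2 _ (.x i 2) _ (by rw [dp_x]; simp [xgadget])
  -- existence of a res variable
  have hex : ∃ a : Fin 3, sig (.var (X i a)) = iRes := by
    cases hb1 : sup (.t i 1) with
    | false =>
      refine ⟨0, t5_res (hT5 _) ?_⟩
      rwa [hu0, hb1] at E01
    | true =>
      cases hb2 : sup (.t i 2) with
      | false =>
        refine ⟨1, t5_res (hT5 _) ?_⟩
        rwa [hb1, hb2] at E12
      | true =>
        refine ⟨2, t5_res (hT5 _) ?_⟩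
        rwa [hb2, hu5] at E25
  -- uniqueness
  have key : ∀ (a b : Fin 3) (σa σb w : Fin 9),
      sig (.var (X i a)) = iRes → sig (.var (X i b)) = iRes →
      sig (.var (X i a)) (sup (.t i 0)) = some (sup (.t i σa)) →
      sig (.var (X i b)) (sup (.t i 0)) = some (sup (.t i σb)) →
      sig (.var (X i a)) (sup (.t i σb)) = some (sup (.t i w)) →
      sig (.x i a) (sup (.t i σa)) = some (sup (.t i 0)) →
      sig (.x i a) (sup (.t i w)) = some (sup (.t i σb)) → False := by
    intro a b σa σb w ha hb e1 e2 e3 r1 r2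
    rw [ha, hu0] at e1
    have hσa : sup (.t i σa) = false := (Option.some.inj e1).symm
    rw [hb, hu0] at e2
    have hσb : sup (.t i σb) = false := (Option.some.inj e2).symm
    rw [ha, hσb] at e3
    have hw : sup (.t i w) = false := (Option.some.inj e3).symm
    rw [hσa, hu0] at r1
    have hxa : sig (.x i a) = iSet := t5_set (hT5 _) r1
    rw [hxa, hw, hσb] at r2
    exact absurd (Option.some.inj r2) (by decide)
  obtain ⟨a, ha⟩ := hex
  refine ⟨a, ha, fun b hb => ?_⟩
  have hb' : sig (.var (X i b)) = iRes := hb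
  by_contra hab
  fin_cases a <;> fin_cases b <;> first
    | exact absurd rfl hab
    | exact key 0 1 1 7 2 ha hb' E01 E07 E72 R10 R27
    | exact key 0 2 1 3 4 ha hb' E01 E03 E34 R10 R43
    | exact key 1 0 7 1 2 ha hb' E07 E01 E12 R70 R21
    | exact key 1 2 7 3 6 ha hb' E07 E03 E36 R70 R63
    | exact key 2 0 3 1 4 ha hb' E03 E01 E14 R30 R41
    | exact key 2 1 3 7 6 ha hb' E03 E07 E76 R30 R67
def memS (j : Fin 9) : Fin 3 → Bool :=
  match j.val with
  | 1 => fun a => a = 0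
  | 2 => fun a => a ≠ 2
  | 3 => fun a => a = 2
  | 4 => fun a => a ≠ 1
  | 5 => fun _ => true
  | 6 => fun a => a ≠ 0
  | 7 => fun a => a = 1
  | _ => fun _ => false

lemma var_step {m : ℕ} {V : Type} [DecidableEq V] {X : Fin m → Fin 3 → V} {M : Set V}
    {js : Fin m → Fin 3} (hjs1 : ∀ i, X i (js i) ∈ M) (hjs2 : ∀ i y, X i y ∈ M → y = js i)
    (i : Fin m) (a : Fin 3) (j j' : Fin 9) [Decidable (X i a ∈ M)]
    (hS : memS j a = false) (hS' : memS j' a = true)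
    (hEq : ∀ c : Fin 3, c ≠ a → memS j c = memS j' c) :
    (if X i a ∈ M then iRes else iNop) (!(memS j (js i))) = some (!(memS j' (js i))) := by
  split
  · next hm =>
    rw [← hjs2 i a hm, hS, hS']
    rfl
  · next hm =>
    have hne : js i ≠ a := fun hh => hm (hh ▸ hjs1 i)
    rw [hEq (js i) hne]
    rfl

lemma x_step {m : ℕ} {V : Type} [DecidableEq V] {X : Fin m → Fin 3 → V} {M : Set V}
    {js : Fin m → Fin 3} (hjs1 : ∀ i, X i (js i) ∈ M) (hjs2 : ∀ i y, X i y ∈ M → y = js i)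
    (i : Fin m) (a : Fin 3) (j j' : Fin 9) [Decidable (X i a ∈ M)]
    (hS : memS j a = false) (hS' : memS j' a = true)
    (hEq : ∀ c : Fin 3, c ≠ a → memS j c = memS j' c) :
    (if X i a ∈ M then iSet else iNop) (!(memS j' (js i))) = some (!(memS j (js i))) := by
  split
  · next hm =>
    rw [← hjs2 i a hm, hS]
    rfl
  · next hm =>
    have hne : js i ≠ a := fun hh => hm (hh ▸ hjs1 i)
    rw [hEq (js i) hne]
    rfl

set_option maxHeartbeats 2000000 in
lemma construct {m : ℕ} {V : Type} [DecidableEq V] (X : Fin m → Fin 3 → V)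
    (M : Set V) (hM : OneInThree X M) :
    ∃ (sup : QState m → Bool) (sig : QEvent m V → Interaction),
      (∀ e, sig e ∈ ({iNop, iSet, iRes, iUsed} : Set Interaction)) ∧
      (∀ s e s', deltaPlus X s e = some s' → sig e (sup s) = some (sup s')) ∧
      sig .k = iUsed ∧ sup .q = false := by
  classical
  have hM' : ∀ i, ∃ j, X i j ∈ M ∧ ∀ y, X i y ∈ M → y = j := hM
  choose js hjs1 hjs2 using hM'
  refine ⟨fun s => match s with
    | .q => false
    | .t i j => !(memS j (js i))
    | .mm j => decide (j ≠ 4)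
    | .p i j => decide (j ≠ 3)
    | _ => true,
   fun e => match e with
    | .k => iUsed
    | .h => iRes
    | .hc _ => iRes
    | .var v => if v ∈ M then iRes else iNop
    | .eu => iRes
    | .x i a => if X i a ∈ M then iSet else iNop
    | _ => iNop, ?_, ?_, rfl, rfl⟩
  · intro e
    cases e <;> simp only [Set.mem_insert_iff, Set.mem_singleton_iff] <;>
      first
        | tauto
        | (split_ifs <;> tauto)
  · intro s e s' h
    cases s with
    | s0 =>
      cases e <;> (try simp only [deltaPlus] at h) <;>
        first
          | exact (Option.some_ne_none _ h.symm).elim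
          | (obtain rfl := Option.some.inj h; rfl)
    | s1 =>
      cases e <;> (try simp only [deltaPlus] at h) <;>
        first
          | exact (Option.some_ne_none _ h.symm).elim
          | (obtain rfl := Option.some.inj h; rfl)
    | q =>
      cases e <;> (try simp only [deltaPlus] at h) <;>
        first
          | exact (Option.some_ne_none _ h.symm).elim
          | (obtain rfl := Option.some.inj h; rfl)
    | t i j =>
      cases e with
      | k =>
        simp only [deltaPlus] at h
        split_ifs at h <;>
          first
            | exact (Option.some_ne_none _ h.symm).elim
            | (obtain rfl := Option.some.inj h; subst_vars; rfl)
      | var v =>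
        simp only [deltaPlus, gadgetQ] at h
        split_ifs at h <;>
          first
            | exact (Option.some_ne_none _ h.symm).elim
            | (obtain rfl := Option.some.inj h
               subst_vars
               exact var_step (js := js) hjs1 hjs2 i _ _ _ (by decide) (by decide) (by decide))
      | x i' a =>
        simp only [deltaPlus] at h
        split_ifs at h with hii
        subst hii
        fin_cases a <;> simp [xgadget] at h <;> split_ifs at h <;>
          first
            | exact (Option.some_ne_none _ h.symm).elim
            | (obtain rfl := Option.some.inj h
               subst_vars
               exact x_step (js := js) hjs1 hjs2 i' _ _ _ (by decide) (by decide) (by decide))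
      | _ => exact absurd h (by simp [deltaPlus])
    | mm j =>
      cases e <;> (try simp only [deltaPlus] at h) <;>
        first
          | exact (Option.some_ne_none _ h.symm).elim
          | (split_ifs at h <;>
              first
                | exact (Option.some_ne_none _ h.symm).elim
                | (obtain rfl := Option.some.inj h; subst_vars; rfl))
    | p i j =>
      cases e <;> (try simp only [deltaPlus] at h) <;>
        first
          | exact (Option.some_ne_none _ h.symm).elim
          | (split_ifs at h with h1 h2 <;>
              first
                | exact (Option.some_ne_none _ h.symm).elim
                | (obtain ⟨rfl, rfl⟩ := h1
                   obtain rfl := Option.some.inj h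
                   rfl)
                | (obtain rfl := Option.some.inj h; subst_vars; rfl))
lemma t5_compl {f : Interaction} (hf : f ∈ T5) : iCompl f ∈ T5 := by
  simp only [T5, Set.mem_insert_iff, Set.mem_singleton_iff] at hf ⊢
  rcases hf with rfl|rfl|rfl|rfl|rfl <;>
    simp [iCompl_nop, iCompl_set, iCompl_res, iCompl_used, iCompl_free]
/-- k is τ-inhibitable at q in A^×_φ iff φ has a one-in-three
model, for τ = {nop, set, res} ∪ ω with nonempty ω ⊆ {used, free}. -/
theorem key_inhibitable_iff_model_loops {m : ℕ} {V : Type} [DecidableEq V] [Fintype V]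
    (X : Fin m → Fin 3 → V) (hcubic : CubicMonotone X)
    (ω : Set Interaction) (hω : ω ⊆ {iUsed, iFree}) (hne : ω.Nonempty) :
    Inhibitable (AphiX X) ({iNop, iSet, iRes} ∪ ω) QEvent.k QState.q ↔
      ∃ M : Set V, OneInThree X M := by
  have hτT5 : ({iNop, iSet, iRes} : Set Interaction) ∪ ω ⊆ T5 := by
    intro f hf
    simp only [Set.mem_union, Set.mem_insert_iff, Set.mem_singleton_iff] at hf
    rcases hf with (rfl|rfl|rfl) | hf
    · simp [T5]
    · simp [T5]
    · simp [T5]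
    · rcases hω hf with rfl | rfl
      · simp [T5]
      · right; right; right; right; rfl
  constructor
  · rintro ⟨sup, sig, hreg, hnone⟩
    have h2 := region_restrict hreg
    have hT5 : ∀ e, sig e ∈ T5 := fun e => hτT5 (hreg.1 e)
    have hk := hreg.1 QEvent.k
    simp only [Set.mem_union, Set.mem_insert_iff, Set.mem_singleton_iff] at hk
    rcases hk with (hk|hk|hk) | hk
    · rw [hk] at hnone
      cases hb : sup .q <;> rw [hb] at hnone <;> exact absurd hnone (by decide)
    · rw [hk] at hnone
      cases hb : sup .q <;> rw [hb] at hnone <;> exact absurd hnone (by decide)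
    · rw [hk] at hnone
      cases hb : sup .q <;> rw [hb] at hnone <;> exact absurd hnone (by decide)
    · have hk2 := hω hk
      simp only [Set.mem_insert_iff, Set.mem_singleton_iff] at hk2
      rcases hk2 with hku | hkf
      · rw [hku] at hnone
        have hq : sup .q = false := by
          cases hb : sup .q
          · rfl
          · rw [hb] at hnone; exact absurd hnone (by decide)
        exact ⟨_, extract X hcubic.1 sup sig hT5 h2 hku hq⟩
      · rw [hkf] at hnone
        have hq : sup .q = true := by
          cases hb : sup .q
          · rw [hb] at hnone; exact absurd hnone (by decide)
          · rfl
        refine ⟨_, extract X hcubic.1 (fun s => !(sup s)) (fun e => iCompl (sig e))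
          (fun e => t5_compl (hT5 e)) (fun s e s' hd => iCompl_trans (h2 s e s' hd))
          (by show iCompl (sig QEvent.k) = iUsed; rw [hkf, iCompl_free]) (by show (!(sup QState.q)) = false; rw [hq]; rfl)⟩
  · rintro ⟨M, hM⟩
    obtain ⟨sup, sig, hmem, h2, hk, hq⟩ := construct X M hM
    obtain ⟨η, hη⟩ := hne
    have hη' := hω hη
    simp only [Set.mem_insert_iff, Set.mem_singleton_iff] at hη'
    rcases hη' with rfl | rfl
    · refine ⟨sup, sig, region_transfer X _ hτT5 sup sig ?_ h2, by rw [hk, hq]; rfl⟩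
      intro e
      have := hmem e
      simp only [Set.mem_insert_iff, Set.mem_singleton_iff] at this
      simp only [Set.mem_union, Set.mem_insert_iff, Set.mem_singleton_iff]
      rcases this with h|h|h|h
      · exact Or.inl (Or.inl h)
      · exact Or.inl (Or.inr (Or.inl h))
      · exact Or.inl (Or.inr (Or.inr h))
      · exact Or.inr (h ▸ hη)
    · refine ⟨fun s => !(sup s), fun e => iCompl (sig e),
        region_transfer X _ hτT5 _ _ ?_ (fun s e s' hd => iCompl_trans (h2 s e s' hd)),
        by show iCompl (sig QEvent.k) (!(sup QState.q)) = none
           rw [hk, iCompl_used, hq]; rfl⟩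
      intro e
      have := hmem e
      simp only [Set.mem_insert_iff, Set.mem_singleton_iff] at this
      simp only [Set.mem_union, Set.mem_insert_iff, Set.mem_singleton_iff]
      rcases this with h|h|h|h
      · rw [h, iCompl_nop]; tauto
      · rw [h, iCompl_set]; tauto
      · rw [h, iCompl_res]; tauto
      · rw [h, iCompl_used]; exact Or.inr hη
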